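/- With β(n) = ⌊φ·n⌋: (a) for all n ≥ 0, a(β(n)) ≥ β(a(n)); (b) for all n ≥ 0, β(a(β(n))) ≥ a(β(a(n))). -/

import Mathlib

/-- The sequence A105774: `a n = n` for `n ≤ 1`, and
`a n = fib (j+1) - a (n - fib j)` where `j ≥ 2` is the unique index
with `fib j < n ≤ fib (j+1)` (realized as the greatest `j ≤ n` with `fib j < n`). -/
def a (n : ℕ) : ℕ :=
  if _h : n ≤ 1 then n
  else
    Nat.fib (Nat.findGreatest (fun j => Nat.fib j < n) n + 1) -
      a (n - Nat.fib (Nat.findGreatest (fun j => Nat.fib j < n) n))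
decreasing_by
  have h2 : 2 ≤ n := by omega
  have hj : 2 ≤ Nat.findGreatest (fun j => Nat.fib j < n) n :=
    Nat.le_findGreatest h2 (by show Nat.fib 2 < n; simp [Nat.fib_two]; omega)
  have hpos : 0 < Nat.fib (Nat.findGreatest (fun j => Nat.fib j < n) n) :=
    Nat.fib_pos.mpr (by omega)
  omega

open Real

/-- `beta n = ⌊φ n⌋`. -/
noncomputable def beta (n : ℕ) : ℕ := ⌊Real.goldenRatio * (n : ℝ)⌋₊

noncomputable def gq : ℝ := goldenRatio - 1
lemma sqrt5_ge : (2:ℝ) ≤ √5 := by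
  nlinarith [Real.sq_sqrt (show (0:ℝ) ≤ 5 by norm_num), Real.sqrt_nonneg 5]
lemma sqrt5_le : √5 ≤ 7/3 := by
  nlinarith [Real.sq_sqrt (show (0:ℝ) ≤ 5 by norm_num), Real.sqrt_nonneg 5]
lemma gold_ge : (3:ℝ)/2 ≤ goldenRatio := by
  rw [goldenRatio]; linarith [sqrt5_ge]
lemma gold_le : goldenRatio ≤ 5/3 := by
  rw [goldenRatio]; linarith [sqrt5_le]
lemma gq_half : (1:ℝ)/2 ≤ gq := by rw [gq]; linarith [gold_ge]
lemma gq_le : gq ≤ 2/3 := by rw [gq]; linarith [gold_le]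
lemma gq_pos : 0 < gq := by linarith [gq_half]
lemma gq_lt_one : gq < 1 := by linarith [gq_le]
lemma gq_sq : gq^2 = 1 - gq := by
  rw [gq]; nlinarith [goldenRatio_sq]
lemma psi_eq : goldenConj = -gq := by
  have := goldenRatio_add_goldenConj; rw [gq]; linarith
lemma gold_fib (k : ℕ) : goldenRatio * Nat.fib k = Nat.fib (k+1) - goldenConj ^ k := by
  have := fib_succ_sub_goldenRatio_mul_fib k; linarith
lemma psi_pow_bounds (k : ℕ) : -gq^k ≤ goldenConj ^ k ∧ goldenConj ^ k ≤ gq^k := by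
  have h : |goldenConj ^ k| = gq ^ k := by
    rw [abs_pow, psi_eq, abs_neg, abs_of_pos gq_pos]
  constructor <;> [skip; skip] <;> (have := abs_le.mp (le_of_eq h); tauto)
lemma gq_pow_le {i j : ℕ} (h : i ≤ j) : gq^j ≤ gq^i :=
  pow_le_pow_of_le_one gq_pos.le gq_lt_one.le h
lemma gq_pow_succ_lt (k : ℕ) : gq^(k+1) < gq^k := by
  calc gq^(k+1) = gq^k * gq := pow_succ gq k
  _ < gq^k * 1 := by have := pow_pos gq_pos k; nlinarith [gq_lt_one]
  _ = gq^k := mul_one _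
lemma gq_tri (i : ℕ) : gq^(i+2) + gq^(i+1) = gq^i := by
  have h : gq^2 + gq = 1 := by nlinarith [gq_sq]
  calc gq^(i+2) + gq^(i+1) = gq^i * (gq^2 + gq) := by ring
  _ = gq^i := by rw [h, mul_one]
lemma gq_pow_half {k : ℕ} (h : 2 ≤ k) : gq^k ≤ 1/2 := by
  calc gq^k ≤ gq^2 := gq_pow_le h
  _ ≤ 1/2 := by nlinarith [gq_sq, gq_half]

open Nat (fib)

lemma beta_eq {n c : ℕ} (h1 : (c:ℝ) ≤ goldenRatio * n) (h2 : goldenRatio * n < c + 1) :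
    beta n = c := by
  rw [beta]
  exact (Nat.floor_eq_iff (by positivity)).mpr ⟨h1, h2⟩
lemma beta_le (n : ℕ) : (beta n : ℝ) ≤ goldenRatio * n := by
  rw [beta]; exact Nat.floor_le (by positivity)
lemma beta_lt (n : ℕ) : goldenRatio * n < beta n + 1 := by
  rw [beta]; exact Nat.lt_floor_add_one _
lemma beta_one : beta 1 = 1 := by
  apply beta_eq <;> push_cast <;> [linarith [gold_ge]; linarith [gold_le]]
lemma beta_zero : beta 0 = 0 := by
  apply beta_eq <;> norm_num
lemma beta_two : beta 2 = 3 := by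
  apply beta_eq <;> push_cast <;> [linarith [gold_ge]; linarith [gold_le]]

/-- Core three-distance bounds: for `1 ≤ r < fib (i+3)`,
`gq^(i+2) ≤ φ r - β r ≤ 1 - gq^(i+2)`. -/
lemma core : ∀ i r : ℕ, 1 ≤ r → r < fib (i+3) →
    gq^(i+2) ≤ goldenRatio * r - beta r ∧ goldenRatio * r - beta r ≤ 1 - gq^(i+2) := by
  intro i
  induction i using Nat.strong_induction_on with
  | _ i IH =>
    match i with
    | 0 =>
      intro r h1 h2
      have hr : r = 1 := by simp [show fib 3 = 2 by decide] at h2; omega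
      subst hr
      rw [beta_one]
      push_cast
      have h : goldenRatio * 1 - 1 = gq := by rw [gq]; ring
      rw [h]
      constructor
      · nlinarith [gq_pos, gq_lt_one]
      · nlinarith [gq_sq, gq_pos]
    | i + 1 =>
      intro r h1 h2
      by_cases hcase : r < fib (i+3)
      · have h := IH i (by omega) r h1 hcase
        have hle : gq^(i+3) ≤ gq^(i+2) := gq_pow_le (by omega)
        constructor <;> [linarith [h.1]; linarith [h.2]]
      · -- fib (i+3) ≤ r < fib (i+4)
        push_neg at hcase
        have h2' : r < fib (i+4) := by rwa [show i+1+3 = i+4 from rfl] at h2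
        obtain ⟨s, hrs⟩ : ∃ s, r = fib (i+3) + s := ⟨r - fib (i+3), by omega⟩
        have hsub : s < fib (i+2) := by
          have : fib (i+4) = fib (i+2) + fib (i+3) := Nat.fib_add_two
          omega
        have hfr : goldenRatio * r = fib (i+4) + (goldenRatio * s - goldenConj^(i+3)) := by
          rw [hrs]; push_cast
          have := gold_fib (i+3)
          rw [mul_add]
          rw [show (i+3)+1 = i+4 from rfl] at this
          linarith
        have hpsi := psi_pow_bounds (i+3)
        rcases Nat.eq_zero_or_pos s with hs0 | hs1
        · -- s = 0: r = fib (i+3)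
          subst hs0
          simp only [Nat.cast_zero, mul_zero, zero_sub] at hfr
          rcases Nat.even_or_odd (i+3) with hev | hod
          · have hp : goldenConj^(i+3) = gq^(i+3) := by rw [psi_eq, hev.neg_pow]
            have hfib1 : 1 ≤ fib (i+4) := Nat.fib_pos.mpr (by omega)
            have hb : beta r = fib (i+4) - 1 := by
              apply beta_eq
              · push_cast [hfib1]
                rw [hfr, hp]; nlinarith [gq_lt_one, gq_pow_le (show 1 ≤ i+3 by omega)]
              · push_cast [hfib1]
                rw [hfr, hp]; nlinarith [pow_pos gq_pos (i+3)]
            rw [hb, hfr, hp]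
            push_cast [hfib1]
            have h12 : gq^(i+3) ≤ 1/2 := gq_pow_half (by omega)
            constructor <;> linarith
          · have hp : goldenConj^(i+3) = -gq^(i+3) := by rw [psi_eq, hod.neg_pow]
            have hb : beta r = fib (i+4) := by
              apply beta_eq
              · rw [hfr, hp]; push_cast; nlinarith [pow_pos gq_pos (i+3)]
              · rw [hfr, hp]; push_cast
                nlinarith [gq_pow_le (show 1 ≤ i+3 by omega), gq_lt_one, gq_pos]
            rw [hb, hfr, hp]
            have h12 : gq^(i+3) ≤ 1/2 := gq_pow_half (by omega)
            constructor <;> linarith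
        · -- 1 ≤ s < fib (i+2): need i ≥ 1
          match i, hsub with
          | 0, hsub => simp [show fib 2 = 1 by decide] at hsub; omega
          | k + 1, hsub =>
            have hIH := IH k (by omega) s hs1 hsub
            -- bounds: gq^(k+2) ≤ φ s - β s ≤ 1 - gq^(k+2)
            have hkey : gq^(k+3) ≤ (goldenRatio * s - beta s) - goldenConj^(k+4) ∧
                (goldenRatio * s - beta s) - goldenConj^(k+4) ≤ 1 - gq^(k+3) := by
              have htri := gq_tri (k+2)
              have hpb := psi_pow_bounds (k+4)
              have : gq^(k+4) ≤ gq^(k+3) := gq_pow_le (by omega)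
              constructor <;> nlinarith [hIH.1, hIH.2, hpb.1, hpb.2]
            have hb : beta r = fib (k+5) + beta s := by
              apply beta_eq
              · push_cast
                rw [show goldenRatio * r = fib (k+1+4) + (goldenRatio * s - goldenConj^(k+1+3)) from hfr]
                push_cast
                have := hkey.1
                have hgp := pow_pos gq_pos (k+3)
                norm_num
                linarith
              · push_cast
                rw [show goldenRatio * r = fib (k+1+4) + (goldenRatio * s - goldenConj^(k+1+3)) from hfr]
                push_cast
                have := hkey.2
                have hgp := pow_pos gq_pos (k+3)
                norm_num
                linarith
            rw [hb]
            rw [show goldenRatio * r = fib (k+1+4) + (goldenRatio * s - goldenConj^(k+1+3)) from hfr]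
            push_cast
            have h1' := hkey.1
            have h2' := hkey.2
            have : gq^(k+1+3) ≤ gq^(k+3) := gq_pow_le (by omega)
            constructor <;> [linarith; linarith]

lemma fib_cast_add (i : ℕ) : (fib (i+4) : ℝ) = fib (i+2) + fib (i+3) := by
  rw [show fib (i+4) = fib (i+2) + fib (i+3) from Nat.fib_add_two]; push_cast; ring

/-- β(F_{i+3} + m) = F_{i+4} + β(m) for 1 ≤ m ≤ F_{i+2}. -/
lemma beta_add (i m : ℕ) (hm1 : 1 ≤ m) (hm2 : m ≤ fib (i+2)) :
    beta (fib (i+3) + m) = fib (i+4) + beta m := by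
  have hmlt : m < fib (i+3) := lt_of_le_of_lt hm2 (Nat.fib_lt_fib_succ (by omega))
  have hc := core i m hm1 hmlt
  have hpsi := psi_pow_bounds (i+3)
  have hlt : gq^(i+3) < gq^(i+2) := gq_pow_succ_lt (i+2)
  have hfr : goldenRatio * ((fib (i+3) : ℝ) + m) =
      (fib (i+4) : ℝ) + (goldenRatio * m - goldenConj^(i+3)) := by
    have := gold_fib (i+3)
    rw [show (i+3)+1 = i+4 from rfl] at this
    nlinarith [this]
  apply beta_eq
  · push_cast
    rw [hfr]
    have := hc.1
    linarith [hpsi.2, gq_pow_le (show i+2 ≤ i+3 by omega)]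
  · push_cast
    rw [hfr]
    have := hc.2
    linarith [hpsi.1]

/-- β(x) + 1 + β(F_{i+4} − x) = F_{i+5} for 1 ≤ x < F_{i+3}. -/
lemma beta_sub (i x : ℕ) (hx1 : 1 ≤ x) (hx2 : x < fib (i+3)) :
    beta x + 1 + beta (fib (i+4) - x) = fib (i+5) := by
  have hc := core i x hx1 hx2
  have hpsi := psi_pow_bounds (i+5)
  have hlt : gq^(i+5) < gq^(i+2) := by
    calc gq^(i+5) ≤ gq^(i+3) := gq_pow_le (by omega)
    _ < gq^(i+2) := gq_pow_succ_lt (i+2)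
  -- b := beta x ≤ fib (i+4)
  have hxle : x ≤ fib (i+4) := le_of_lt (lt_of_lt_of_le hx2 Nat.fib_le_fib_succ)
  have hble : beta x + 1 ≤ fib (i+4) := by
    have h1 : (beta x : ℝ) + gq^(i+2) ≤ goldenRatio * x := by linarith [hc.1]
    have h2 : goldenRatio * x < goldenRatio * fib (i+3) := by
      have : (x:ℝ) < fib (i+3) := by exact_mod_cast hx2
      nlinarith [goldenRatio_pos]
    have h3 : goldenRatio * (fib (i+3) : ℝ) = fib (i+4) - goldenConj^(i+3) := by
      have := gold_fib (i+3); rw [show (i+3)+1 = i+4 from rfl] at this; exact this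
    have hpb := psi_pow_bounds (i+3)
    have : (beta x : ℝ) < fib (i+4) := by
      nlinarith [gq_pow_le (show i+2 ≤ i+3 by omega), pow_pos gq_pos (i+2)]
    exact_mod_cast by exact_mod_cast Nat.lt_iff_add_one_le.mp (by exact_mod_cast this)
  have hfib45 : fib (i+5) = fib (i+3) + fib (i+4) := Nat.fib_add_two
  have hfib2 : 2 ≤ fib (i+3) := by
    have : fib 3 ≤ fib (i+3) := Nat.fib_mono (by omega)
    simpa [show fib 3 = 2 by decide] using this
  have hkey : beta (fib (i+4) - x) = fib (i+5) - 1 - beta x := by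
    apply beta_eq
    · have hcast : ((fib (i+4) - x : ℕ) : ℝ) = (fib (i+4) : ℝ) - x := by
        push_cast [hxle]; ring
      have hcast2 : ((fib (i+5) - 1 - beta x : ℕ) : ℝ) = (fib (i+5) : ℝ) - 1 - beta x := by
        rw [Nat.sub_sub, Nat.cast_sub (show 1 + beta x ≤ fib (i+5) by omega)]
        push_cast; ring
      rw [hcast, hcast2]
      have h4 : goldenRatio * ((fib (i+4):ℝ) - x) =
          (fib (i+5) : ℝ) - goldenConj^(i+4) - goldenRatio * x := by
        have := gold_fib (i+4); rw [show (i+4)+1 = i+5 from rfl] at this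
        nlinarith [this]
      rw [h4]
      have hpb4 := psi_pow_bounds (i+4)
      have : goldenRatio * x - beta x ≤ 1 - gq^(i+2) := hc.2
      have h5 : gq^(i+4) < gq^(i+2) := by
        calc gq^(i+4) ≤ gq^(i+3) := gq_pow_le (by omega)
        _ < gq^(i+2) := gq_pow_succ_lt (i+2)
      linarith [hpb4.2]
    · have hcast : ((fib (i+4) - x : ℕ) : ℝ) = (fib (i+4) : ℝ) - x := by
        push_cast [hxle]; ring
      have hcast2 : ((fib (i+5) - 1 - beta x : ℕ) : ℝ) = (fib (i+5) : ℝ) - 1 - beta x := by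
        rw [Nat.sub_sub, Nat.cast_sub (show 1 + beta x ≤ fib (i+5) by omega)]
        push_cast; ring
      rw [hcast, hcast2]
      have h4 : goldenRatio * ((fib (i+4):ℝ) - x) =
          (fib (i+5) : ℝ) - goldenConj^(i+4) - goldenRatio * x := by
        have := gold_fib (i+4); rw [show (i+4)+1 = i+5 from rfl] at this
        nlinarith [this]
      rw [h4]
      have hpb4 := psi_pow_bounds (i+4)
      have : gq^(i+2) ≤ goldenRatio * x - beta x := hc.1
      have h5 : gq^(i+4) < gq^(i+2) := by
        calc gq^(i+4) ≤ gq^(i+3) := gq_pow_le (by omega)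
        _ < gq^(i+2) := gq_pow_succ_lt (i+2)
      linarith [hpb4.1]
  omega

lemma beta_mono {m n : ℕ} (h : m ≤ n) : beta m ≤ beta n := by
  rw [beta, beta]
  apply Nat.floor_le_floor
  have : (m:ℝ) ≤ n := by exact_mod_cast h
  nlinarith [goldenRatio_pos]
lemma beta_pos {m : ℕ} (h : 1 ≤ m) : 1 ≤ beta m := by
  calc 1 = beta 1 := beta_one.symm
  _ ≤ beta m := beta_mono h
lemma beta_succ_ge (m : ℕ) : beta m + 1 ≤ beta (m+1) := by
  rw [beta, beta]
  apply Nat.le_floor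
  push_cast
  have := Nat.floor_le (show 0 ≤ goldenRatio * (m:ℝ) by positivity)
  nlinarith [gold_ge]
lemma beta_fib_le (k : ℕ) : beta (fib k) ≤ fib (k+1) := by
  rcases Nat.eq_zero_or_pos k with rfl | hk
  · simp [show fib 0 = 0 from rfl, beta_zero]
  · have h : goldenRatio * (fib k : ℝ) < fib (k+1) + 1 := by
      have := gold_fib k
      have hpb := psi_pow_bounds k
      have : gq^k < 1 := by
        calc gq^k ≤ gq^1 := gq_pow_le hk
        _ < 1 := by simpa using gq_lt_one
      linarith [gold_fib k, hpb.1]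
    have := (Nat.floor_lt (show 0 ≤ goldenRatio * (fib k:ℝ) by positivity)).mpr
      (by exact_mod_cast h)
    rw [beta]; omega

/-- Spec of the findGreatest index. -/
lemma J_spec {n : ℕ} (hn : 2 ≤ n) :
    2 ≤ Nat.findGreatest (fun j => fib j < n) n ∧
    fib (Nat.findGreatest (fun j => fib j < n) n) < n ∧
    n ≤ fib (Nat.findGreatest (fun j => fib j < n) n + 1) := by
  set J := Nat.findGreatest (fun j => fib j < n) n with hJ
  have h2 : 2 ≤ J := Nat.le_findGreatest hn (by simp [show fib 2 = 1 by decide]; omega)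
  have hspec : fib J < n := Nat.findGreatest_spec (P := fun j => fib j < n) hn
    (by simp [show fib 2 = 1 by decide]; omega)
  refine ⟨h2, hspec, ?_⟩
  by_contra h
  push_neg at h
  have hJn : J + 1 ≤ n := by
    have := Nat.le_fib_add_one (J+1)
    omega
  exact Nat.findGreatest_is_greatest (Nat.lt_succ_self J) hJn h

lemma J_exists {n : ℕ} (hn : 2 ≤ n) : ∃ J, 2 ≤ J ∧ fib J < n ∧ n ≤ fib (J+1) :=
  ⟨_, J_spec hn⟩

lemma a_rec {n j : ℕ} (hn : 2 ≤ n) (hj : 2 ≤ j) (h1 : fib j < n) (h2 : n ≤ fib (j+1)) :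
    a n = fib (j+1) - a (n - fib j) := by
  obtain ⟨hJ2, hJ1, hJ3⟩ := J_spec hn
  set J := Nat.findGreatest (fun j => fib j < n) n with hJ
  have hEq : J = j := by
    rcases lt_trichotomy J j with h | h | h
    · have : fib (J+1) ≤ fib j := Nat.fib_mono (by omega)
      omega
    · exact h
    · have : fib (j+1) ≤ fib J := Nat.fib_mono (by omega)
      omega
  rw [a]
  rw [dif_neg (by omega)]
  rw [← hJ, hEq]

lemma a_zero : a 0 = 0 := by rw [a]; norm_num
lemma a_one : a 1 = 1 := by rw [a]; norm_num
lemma a_two : a 2 = 1 := by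
  rw [a_rec (le_refl 2) (le_refl 2) (by decide) (by decide)]
  simp [show fib 3 = 2 by decide, show fib 2 = 1 by decide, a_one]
lemma a_three : a 3 = 2 := by
  rw [a_rec (by omega) (show 2 ≤ 3 by omega) (by decide) (by decide)]
  simp [show fib 4 = 3 by decide, show fib 3 = 2 by decide, a_one]

/-- Bounds: `1 ≤ a n` and `a n ≤ fib k - 1` whenever `n ≤ fib k`, `3 ≤ k`. -/
lemma abound : ∀ n, 1 ≤ n → 1 ≤ a n ∧ ∀ k, 3 ≤ k → n ≤ fib k → a n ≤ fib k - 1 := by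
  intro n
  induction n using Nat.strong_induction_on with
  | _ n IH =>
    intro hn1
    rcases eq_or_lt_of_le hn1 with h1 | hn2
    · rw [← h1, a_one]
      refine ⟨le_refl 1, fun k hk hnk => ?_⟩
      have : fib 3 ≤ fib k := Nat.fib_mono hk
      simp only [show fib 3 = 2 by decide] at this
      omega
    · -- n ≥ 2
      have hn : 2 ≤ n := hn2
      obtain ⟨hJ2, hJ1, hJ3⟩ := J_spec hn
      set J := Nat.findGreatest (fun j => fib j < n) n with hJ
      have hrec : a n = fib (J+1) - a (n - fib J) := a_rec hn hJ2 hJ1 hJ3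
      set m := n - fib J with hm
      have hfibJ1 : fib (J+1) = fib (J-1) + fib J := by
        rw [show J + 1 = (J-1) + 2 by omega, show J = (J-1) + 1 by omega]
        exact Nat.fib_add_two
      have hm1 : 1 ≤ m := by omega
      have hmle : m ≤ fib (J-1) := by omega
      have hmlt : m < n := by
        have : 1 ≤ fib J := Nat.fib_pos.mpr (by omega)
        omega
      have hsecond : ∀ k, 3 ≤ k → n ≤ fib k → fib (J+1) ≤ fib k := by
        intro k hk hnk
        apply Nat.fib_mono
        by_contra hc
        push_neg at hc
        have : fib k ≤ fib J := Nat.fib_mono (by omega)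
        omega
      rcases eq_or_lt_of_le hJ2 with hJeq | hJge3'
      · -- J = 2 : m = 1, a n = 1
        have hm1' : m = 1 := by
          have : fib (J-1) = 1 := by rw [← hJeq]; decide
          omega
        have han : a n = 1 := by
          rw [hrec, hm1', a_one, ← hJeq]
          decide
        rw [han]
        refine ⟨le_refl 1, fun k hk hnk => ?_⟩
        have h1 := hsecond k hk hnk
        have : fib (2+1) = 2 := by decide
        rw [← hJeq] at h1
        omega
      · have hJge3 : 3 ≤ J := hJge3'
        have hfibJ2 : 2 ≤ fib J := by
          have := Nat.fib_mono hJge3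
          simpa [show fib 3 = 2 by decide] using this
        have hx : 1 ≤ a m ∧ a m ≤ fib J - 1 := by
          rcases eq_or_lt_of_le hm1 with hmeq | hm2
          · rw [← hmeq, a_one]; omega
          · -- m ≥ 2, hence J ≥ 4
            have hJ4 : 4 ≤ J := by
              by_contra hc
              push_neg at hc
              have hj3 : J = 3 := by omega
              rw [hj3] at hmle
              simp [show fib (3-1) = 1 by decide] at hmle
              omega
            obtain ⟨hxl, hxu⟩ := IH m hmlt hm1
            have := hxu (J-1) (by omega) hmle
            have : fib (J-1) ≤ fib J := Nat.fib_mono (by omega)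
            omega
        refine ⟨by omega, fun k hk hnk => ?_⟩
        have := hsecond k hk hnk
        omega

/-- Main two-sided lemma: `β(a n) ≤ a(β n) ≤ β(a n) + 1`. -/
lemma amain : ∀ n, beta (a n) ≤ a (beta n) ∧ a (beta n) ≤ beta (a n) + 1 := by
  intro n
  induction n using Nat.strong_induction_on with
  | _ n IH =>
    match n, IH with
    | 0, _ => simp [a_zero, beta_zero]
    | 1, _ => simp [a_one, beta_one]
    | 2, _ =>
      rw [beta_two, a_two, beta_one, a_three]
      omega
    | (N+3), IH =>
      set n := N + 3 with hn3
      have hn : 2 ≤ n := by omega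
      obtain ⟨J, hJ2, hJ1, hJ3⟩ := J_exists hn
      have hJge3 : 3 ≤ J := by
        by_contra hc
        push_neg at hc
        have hJ2' : J = 2 := by omega
        rw [hJ2'] at hJ3
        have : fib (2+1) = 2 := by decide
        omega
      obtain ⟨i, rfl⟩ : ∃ i, J = i + 3 := ⟨J - 3, by omega⟩
      have e1 : fib (i+3+1) = fib (i+4) := rfl
      have e2 : fib (i+4+1) = fib (i+5) := rfl
      have hrec : a n = fib (i+4) - a (n - fib (i+3)) := a_rec hn hJ2 hJ1 hJ3
      set m := n - fib (i+3) with hm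
      have hfibJ1 : fib (i+4) = fib (i+2) + fib (i+3) := Nat.fib_add_two
      have hm1 : 1 ≤ m := by omega
      have hmle : m ≤ fib (i+2) := by omega
      have hmlt : m < n := by
        have : 1 ≤ fib (i+3) := Nat.fib_pos.mpr (by omega)
        omega
      have hfib32 : 2 ≤ fib (i+3) := by
        have := Nat.fib_mono (show 3 ≤ i+3 by omega)
        simpa [show fib 3 = 2 by decide] using this
      -- bounds on x = a m
      have hx : 1 ≤ a m ∧ a m < fib (i+3) := by
        rcases eq_or_lt_of_le hm1 with hmeq | hm2
        · rw [← hmeq, a_one]; omega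
        · have hi1 : 3 ≤ i + 2 := by
            by_contra hc
            push_neg at hc
            have : i = 0 := by omega
            rw [this] at hmle
            simp [show fib 2 = 1 by decide] at hmle
            omega
          obtain ⟨hxl, hxu⟩ := abound m (by omega)
          have h1 := hxu (i+2) hi1 hmle
          have h2 : fib (i+2) ≤ fib (i+3) := Nat.fib_le_fib_succ
          have h3 : 1 ≤ fib (i+2) := Nat.fib_pos.mpr (by omega)
          omega
      -- beta n
      have hbn : beta n = fib (i+4) + beta m := by
        rw [show n = fib (i+3) + m by omega]
        exact beta_add i m hm1 hmle
      have hbm1 : 1 ≤ beta m := beta_pos hm1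
      have hbmle : beta m ≤ fib (i+3) := le_trans (beta_mono hmle) (beta_fib_le (i+2))
      have hfib45 : fib (i+5) = fib (i+3) + fib (i+4) := Nat.fib_add_two
      -- a (beta n)
      have hrec2 : a (beta n) = fib (i+5) - a (beta m) := by
        have := a_rec (n := beta n) (j := i+4) (by omega) (by omega)
          (by omega) (by omega)
        rw [this, show beta n - fib (i+4) = beta m by omega]
      have IHm := IH m hmlt
      have habm : 1 ≤ a (beta m) ∧ a (beta m) ≤ fib (i+5) - 1 := by
        obtain ⟨h1, h2⟩ := abound (beta m) hbm1
        exact ⟨h1, h2 (i+5) (by omega) (by omega)⟩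
      have hbsub := beta_sub i (a m) hx.1 hx.2
      rw [hrec2, hrec]
      omega

lemma a_lt_beta {m : ℕ} (hm : 2 ≤ m) : a m + 1 ≤ beta m := by
  obtain ⟨J, hJ2, hJ1, hJ3⟩ := J_exists hm
  rcases eq_or_lt_of_le hJ2 with hJeq | hJge3'
  · subst hJeq
    have hm2 : m = 2 := by
      have h1 : fib (2+1) = 2 := by decide
      have h2 : fib 2 = 1 := by decide
      omega
    rw [hm2, a_two, beta_two]
    omega
  · have hJge3 : 3 ≤ J := hJge3'
    obtain ⟨i, rfl⟩ : ∃ i, J = i + 3 := ⟨J - 3, by omega⟩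
    have e1 : fib (i+3+1) = fib (i+4) := rfl
    have hfibJ1 : fib (i+4) = fib (i+2) + fib (i+3) := Nat.fib_add_two
    have hbm : beta m = fib (i+4) + beta (m - fib (i+3)) := by
      conv_lhs => rw [show m = fib (i+3) + (m - fib (i+3)) by omega]
      have g1 : 1 ≤ m - fib (i+3) := by omega
      have g2 : m - fib (i+3) ≤ fib (i+2) := by omega
      exact beta_add i _ g1 g2
    have hb1 : 1 ≤ beta (m - fib (i+3)) := beta_pos (by omega)
    have hau : a m ≤ fib (i+4) - 1 := (abound m (by omega)).2 (i+4) (by omega) hJ3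
    omega

/-- (a) `a (β n) ≥ β (a n)`; (b) `β (a (β n)) ≥ a (β (a n))`. -/
theorem a105774_composition_inequalities :
    (∀ n : ℕ, beta (a n) ≤ a (beta n)) ∧
    (∀ n : ℕ, a (beta (a n)) ≤ beta (a (beta n))) := by
  constructor
  · exact fun n => (amain n).1
  · intro n
    rcases Nat.lt_or_ge n 2 with hn | hn
    · interval_cases n
      · simp [a_zero, beta_zero]
      · simp [a_one, beta_one]
    · have hm1 : 1 ≤ a n := (abound n (by omega)).1
      rcases eq_or_lt_of_le hm1 with hmeq | hm2
      · rw [← hmeq, beta_one, a_one]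
        have h1 : 1 ≤ beta n := beta_pos (by omega)
        have h2 : 1 ≤ a (beta n) := (abound (beta n) h1).1
        exact beta_pos h2
      · have hm : 2 ≤ a n := hm2
        calc a (beta (a n)) ≤ beta (a (a n)) + 1 := (amain (a n)).2
        _ ≤ beta (a (a n) + 1) := beta_succ_ge _
        _ ≤ beta (beta (a n)) := beta_mono (a_lt_beta hm)
        _ ≤ beta (a (beta n)) := beta_mono (amain n).1
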